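/- On any bounded interval [A, 1.01A] with A > 0, the Lebesgue measure of the complement of 𝒟(ν,τ;α) (the set of ω with |ωα·k − 2nπ| ≥ ν/∏_j(1+⟨⟨j⟩⟩^{1+τ}|k_j|^{1+τ}) for all nonzero finitely supported k and all integers n) is at most ν·C(τ,τ₀,ν₀,A), where α satisfies the infinite-dimensional Diophantine condition with constants ν₀, τ₀ and τ > τ₀ + 1. -/

import Mathlib

open MeasureTheory Complex

/-- `⟨⟨j⟩⟩ = max {|j|, 1}` -/
noncomputable def jwt (j : ℕ) : ℝ := max (j : ℝ) 1

/-- `|k|_s = ∑_j ⟨⟨j⟩⟩^s |k_j|` for a finitely supported integer vector `k`. -/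
noncomputable def swt (s : ℝ) (k : ℕ →₀ ℤ) : ℝ :=
  ∑ j ∈ k.support, jwt j ^ s * |(k j : ℝ)|

/-- `‖k‖₁ = ∑_j |k_j|`. -/
noncomputable def twt1 (k : ℕ →₀ ℤ) : ℝ := ∑ j ∈ k.support, |(k j : ℝ)|

/-- `∏_j (1 + ⟨⟨j⟩⟩^{1+τ} |k_j|^{1+τ})` -/
noncomputable def dprod (τ : ℝ) (k : ℕ →₀ ℤ) : ℝ :=
  ∏ j ∈ k.support, (1 + jwt j ^ (1 + τ) * |(k j : ℝ)| ^ (1 + τ))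

/-- `α · k` -/
noncomputable def adot (α : ℕ → ℝ) (k : ℕ →₀ ℤ) : ℝ :=
  ∑ j ∈ k.support, α j * (k j : ℝ)

/-- `k · σ` for complex `σ`. -/
noncomputable def cdot (k : ℕ →₀ ℤ) (σ : ℕ → ℂ) : ℂ :=
  ∑ j ∈ k.support, (k j : ℂ) * σ j

/-- The weighted ℓ¹ Fourier norm `‖h‖_ρ = ∑_k |h_k| e^{ρ |k|_s}` (valued in `ℝ≥0∞`). -/
noncomputable def anorm (ρ s : ℝ) (h : (ℕ →₀ ℤ) → ℂ) : ENNReal :=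
  ∑' k : ℕ →₀ ℤ, (‖h k‖₊ : ENNReal) * ENNReal.ofReal (Real.exp (ρ * swt s k))

/-- Evaluation of a Fourier coefficient family at a (complexified) point of the torus. -/
noncomputable def aeval (h : (ℕ →₀ ℤ) → ℂ) (σ : ℕ → ℂ) : ℂ :=
  ∑' k : ℕ →₀ ℤ, h k * Complex.exp (Complex.I * cdot k σ)

/-- The thickened infinite-dimensional torus (imaginary parts of width `ρ ⟨⟨j⟩⟩^s`). -/
def Strip (ρ s : ℝ) : Set (ℕ → ℂ) := {σ | ∀ j, |(σ j).im| ≤ ρ * jwt j ^ s}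

/-- `F` is represented on the strip of width `ρ` by the Fourier coefficients `c`. -/
def HasCoeffsOn (ρ s : ℝ) (F : (ℕ → ℂ) → ℂ) (c : (ℕ →₀ ℤ) → ℂ) : Prop :=
  ∀ σ ∈ Strip ρ s, HasSum (fun k : ℕ →₀ ℤ => c k * Complex.exp (Complex.I * cdot k σ)) (F σ)


/-! ### Auxiliary material for the proof of `stmt1` -/

lemma one_le_jwt (j : ℕ) : 1 ≤ jwt j := le_max_right _ _
lemma jwt_pos (j : ℕ) : 0 < jwt j := lt_of_lt_of_le one_pos (one_le_jwt j)
lemma jwt_rpow_nonneg (j : ℕ) (s : ℝ) : 0 ≤ jwt j ^ s := Real.rpow_nonneg (jwt_pos j).le s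

/-- the factor `2 ⟨⟨j⟩⟩^{-δ} |m|^{-δ}` (as `1` for `m = 0`). -/
noncomputable def cfac (δ : ℝ) (j : ℕ) (m : ℤ) : ENNReal :=
  if m = 0 then 1 else ENNReal.ofReal (2 * jwt j ^ (-δ) * |(m : ℝ)| ^ (-δ))

/-- the product of the factors over the support. -/
noncomputable def Gw (δ : ℝ) (k : ℕ →₀ ℤ) : ENNReal :=
  ∏ j ∈ k.support, cfac δ j (k j)

lemma Gw_fac (δ : ℝ) (N : ℕ) (k : ℕ →₀ ℤ) :
    Gw δ k = cfac δ N (k N) * Gw δ (k.erase N) := by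
  classical
  by_cases h : k N = 0
  · have h1 : k.erase N = k := Finsupp.erase_of_notMem_support (by
      simp [Finsupp.mem_support_iff, h])
    rw [h1, h, cfac, if_pos rfl, one_mul]
  · have hN : N ∈ k.support := Finsupp.mem_support_iff.2 h
    have h2 : (k.erase N).support = k.support.erase N := Finsupp.support_erase
    rw [Gw, Gw, h2, ← Finset.mul_prod_erase _ _ hN]
    congr 1
    exact Finset.prod_congr rfl fun j hj =>
      by rw [Finsupp.erase_ne (Finset.ne_of_mem_erase hj)]

lemma sumGw_le (δ : ℝ) : ∀ (N : ℕ) (F : Finset (ℕ →₀ ℤ)),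
    (∀ k ∈ F, ∀ j ∈ k.support, j < N) →
    ∑ k ∈ F, Gw δ k ≤ ∏ j ∈ Finset.range N, ∑' m : ℤ, cfac δ j m := by
  classical
  intro N
  induction N with
  | zero =>
    intro F hF
    have hsub : F ⊆ {0} := by
      intro k hk
      have : k.support = ∅ := by
        by_contra hne
        obtain ⟨j, hj⟩ := Finset.nonempty_iff_ne_empty.2 hne
        exact absurd (hF k hk j hj) (by omega)
      simp only [Finset.mem_singleton]
      exact Finsupp.support_eq_empty.1 this
    calc ∑ k ∈ F, Gw δ k ≤ ∑ k ∈ ({0} : Finset (ℕ →₀ ℤ)), Gw δ k :=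
          Finset.sum_le_sum_of_subset hsub
      _ = Gw δ 0 := Finset.sum_singleton _ _
      _ = 1 := by simp [Gw]
      _ = _ := by simp
  | succ N ih =>
    intro F hF
    set T : ℕ → ENNReal := fun j => ∑' m : ℤ, cfac δ j m with hT
    have hmaps : ∀ k ∈ F, k N ∈ F.image (fun k : ℕ →₀ ℤ => k N) :=
      fun k hk => Finset.mem_image_of_mem _ hk
    rw [← Finset.sum_fiberwise_of_maps_to hmaps]
    have hfiber : ∀ m ∈ F.image (fun k : ℕ →₀ ℤ => k N),
        ∑ k ∈ F.filter (fun k => k N = m), Gw δ k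
          ≤ cfac δ N m * ∏ j ∈ Finset.range N, T j := by
      intro m _
      have h1 : ∑ k ∈ F.filter (fun k => k N = m), Gw δ k
          = cfac δ N m * ∑ k ∈ F.filter (fun k => k N = m), Gw δ (k.erase N) := by
        rw [Finset.mul_sum]
        refine Finset.sum_congr rfl fun k hk => ?_
        have hkN : k N = m := (Finset.mem_filter.1 hk).2
        rw [Gw_fac δ N k, hkN]
      rw [h1]
      refine mul_le_mul_right ?_ _
      have hinj : Set.InjOn (fun k : ℕ →₀ ℤ => k.erase N)
          (F.filter (fun k => k N = m)) := by
        intro k1 h1' k2 h2' he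
        have hk1 : k1 N = m := (Finset.mem_filter.1 h1').2
        have hk2 : k2 N = m := (Finset.mem_filter.1 h2').2
        ext j
        by_cases hj : j = N
        · rw [hj, hk1, hk2]
        · have := congrArg (fun f : ℕ →₀ ℤ => f j) he
          simpa [Finsupp.erase_ne hj] using this
      rw [← Finset.sum_image hinj]
      refine ih _ ?_
      intro k' hk' j hj
      obtain ⟨k, hk, rfl⟩ := Finset.mem_image.1 hk'
      have hjN : j ≠ N := by
        intro h; rw [h] at hj
        simp [Finsupp.support_erase] at hj
      have : j ∈ k.support := by
        have := Finsupp.support_erase (a := N) (f := k) ▸ hj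
        exact Finset.mem_of_mem_erase this
      have := hF k (Finset.mem_filter.1 hk).1 j this
      omega
    calc ∑ m ∈ F.image (fun k : ℕ →₀ ℤ => k N),
          ∑ k ∈ F.filter (fun k => k N = m), Gw δ k
        ≤ ∑ m ∈ F.image (fun k : ℕ →₀ ℤ => k N),
            cfac δ N m * ∏ j ∈ Finset.range N, T j :=
          Finset.sum_le_sum hfiber
      _ = (∑ m ∈ F.image (fun k : ℕ →₀ ℤ => k N), cfac δ N m)
            * ∏ j ∈ Finset.range N, T j := by rw [Finset.sum_mul]
      _ ≤ T N * ∏ j ∈ Finset.range N, T j := by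
          exact mul_le_mul_left (ENNReal.sum_le_tsum _) _
      _ = ∏ j ∈ Finset.range (N + 1), T j := by
          rw [Finset.prod_range_succ, mul_comm]

/-- summability of `(n+1)^{-δ}` -/
lemma sum_zeta {δ : ℝ} (hδ : 1 < δ) : Summable (fun n : ℕ => ((n : ℝ) + 1) ^ (-δ)) := by
  have h1 : Summable (fun n : ℕ => ((n : ℝ) ^ δ)⁻¹) := Real.summable_nat_rpow_inv.2 hδ
  have h2 := (summable_nat_add_iff 1).2 h1
  refine h2.congr fun n => ?_
  rw [← Real.rpow_neg (by positivity)]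
  push_cast
  norm_num

lemma zeta_nonneg {δ : ℝ} : 0 ≤ ∑' n : ℕ, ((n : ℝ) + 1) ^ (-δ) :=
  tsum_nonneg fun n => by positivity

lemma T_le {δ : ℝ} (hδ : 1 < δ) (j : ℕ) :
    ∑' m : ℤ, cfac δ j m
      ≤ ENNReal.ofReal (1 + 4 * (∑' n : ℕ, ((n : ℝ) + 1) ^ (-δ)) * jwt j ^ (-δ)) := by
  set Z := ∑' n : ℕ, ((n : ℝ) + 1) ^ (-δ) with hZdef
  have hw : 0 ≤ jwt j ^ (-δ) := jwt_rpow_nonneg j _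
  have hZ : 0 ≤ Z := zeta_nonneg
  have hsplit : ∑' m : ℤ, cfac δ j m
      = (∑' n : ℕ, cfac δ j (n : ℤ)) + ∑' n : ℕ, cfac δ j (-((n : ℤ) + 1)) :=
    tsum_of_nat_of_neg_add_one ENNReal.summable ENNReal.summable
  have hnat : (∑' n : ℕ, cfac δ j (n : ℤ))
      = 1 + ∑' n : ℕ, cfac δ j ((n : ℤ) + 1) := by
    rw [tsum_eq_zero_add' ENNReal.summable]
    simp [cfac]
  have hval : ∀ n : ℕ, cfac δ j ((n : ℤ) + 1)
      = ENNReal.ofReal (2 * jwt j ^ (-δ) * ((n : ℝ) + 1) ^ (-δ)) := by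
    intro n
    rw [cfac, if_neg (by omega)]
    congr 2
    push_cast
    rw [abs_of_pos (by positivity)]
  have hvalneg : ∀ n : ℕ, cfac δ j (-((n : ℤ) + 1))
      = ENNReal.ofReal (2 * jwt j ^ (-δ) * ((n : ℝ) + 1) ^ (-δ)) := by
    intro n
    rw [cfac, if_neg (by omega)]
    congr 2
    push_cast
    rw [abs_neg, abs_of_pos (by positivity)]
  have hS : (∑' n : ℕ, ENNReal.ofReal (2 * jwt j ^ (-δ) * ((n : ℝ) + 1) ^ (-δ)))
      = ENNReal.ofReal (2 * jwt j ^ (-δ) * Z) := by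
    rw [hZdef, ← ENNReal.ofReal_tsum_of_nonneg (fun n => by positivity)
      ((sum_zeta hδ).mul_left _)]
    rw [tsum_mul_left]
  rw [hsplit, hnat, tsum_congr hval, tsum_congr hvalneg, hS]
  rw [← ENNReal.ofReal_one, ← ENNReal.ofReal_add (by norm_num) (by positivity),
    ← ENNReal.ofReal_add (by positivity) (by positivity)]
  apply ENNReal.ofReal_le_ofReal
  nlinarith

lemma sum_jwt {δ : ℝ} (hδ : 1 < δ) : Summable (fun j : ℕ => jwt j ^ (-δ)) := by
  have h1 : Summable (fun n : ℕ => ((n : ℝ) + 1) ^ (-δ)) := sum_zeta hδ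
  refine Summable.of_nonneg_of_le (fun j => jwt_rpow_nonneg j _) (fun j => ?_)
    (h1.mul_left ((2 : ℝ) ^ δ))
  have hj : ((j : ℝ) + 1) / 2 ≤ jwt j := by
    rcases Nat.eq_zero_or_pos j with h | h
    · subst h; simp [jwt]; norm_num
    · have : (1 : ℝ) ≤ (j : ℝ) := by exact_mod_cast h
      calc ((j : ℝ) + 1) / 2 ≤ (j : ℝ) := by linarith
        _ ≤ jwt j := le_max_left _ _
  calc jwt j ^ (-δ) ≤ (((j : ℝ) + 1) / 2) ^ (-δ) := by
        apply Real.rpow_le_rpow_of_nonpos (by positivity) hj (by linarith)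
    _ = (2:ℝ) ^ δ * ((j : ℝ) + 1) ^ (-δ) := by
        rw [Real.div_rpow (by positivity) (by norm_num),
          Real.rpow_neg (by norm_num : (0:ℝ) ≤ 2)]
        field_simp

lemma Gw_tsum_le {δ : ℝ} (hδ : 1 < δ) :
    ∑' k : ℕ →₀ ℤ, Gw δ k
      ≤ ENNReal.ofReal (Real.exp (4 * (∑' n : ℕ, ((n : ℝ) + 1) ^ (-δ))
          * ∑' j : ℕ, jwt j ^ (-δ))) := by
  set Z := ∑' n : ℕ, ((n : ℝ) + 1) ^ (-δ) with hZdef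
  set W := ∑' j : ℕ, jwt j ^ (-δ) with hWdef
  have hZ : 0 ≤ Z := zeta_nonneg
  rw [ENNReal.tsum_eq_iSup_sum]
  refine iSup_le fun F => ?_
  set N := (F.sup fun k => k.support.sup id) + 1 with hN
  have hsupp : ∀ k ∈ F, ∀ j ∈ k.support, j < N := by
    intro k hk j hj
    have h1 : j ≤ k.support.sup id := Finset.le_sup (f := id) hj
    have h2 : k.support.sup id ≤ F.sup fun k => k.support.sup id :=
      Finset.le_sup (f := fun k => k.support.sup id) hk
    omega
  calc ∑ k ∈ F, Gw δ k ≤ ∏ j ∈ Finset.range N, ∑' m : ℤ, cfac δ j m :=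
        sumGw_le δ N F hsupp
    _ ≤ ∏ j ∈ Finset.range N, ENNReal.ofReal (1 + 4 * Z * jwt j ^ (-δ)) :=
        Finset.prod_le_prod' fun j _ => T_le hδ j
    _ = ENNReal.ofReal (∏ j ∈ Finset.range N, (1 + 4 * Z * jwt j ^ (-δ))) :=
        (ENNReal.ofReal_prod_of_nonneg fun j _ => by
          have := jwt_rpow_nonneg j (-δ); nlinarith).symm
    _ ≤ ENNReal.ofReal (Real.exp (4 * Z * W)) := by
        apply ENNReal.ofReal_le_ofReal
        calc ∏ j ∈ Finset.range N, (1 + 4 * Z * jwt j ^ (-δ))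
            ≤ ∏ j ∈ Finset.range N, Real.exp (4 * Z * jwt j ^ (-δ)) := by
              refine Finset.prod_le_prod (fun j _ => by
                have := jwt_rpow_nonneg j (-δ); nlinarith) (fun j _ => ?_)
              have := Real.add_one_le_exp (4 * Z * jwt j ^ (-δ))
              linarith
          _ = Real.exp (∑ j ∈ Finset.range N, 4 * Z * jwt j ^ (-δ)) :=
              (Real.exp_sum _ _).symm
          _ ≤ Real.exp (4 * Z * W) := by
              apply Real.exp_le_exp.2
              rw [← Finset.mul_sum]
              refine mul_le_mul_of_nonneg_left ?_ (by positivity)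
              exact (sum_jwt hδ).sum_le_tsum (Finset.range N) (fun j _ => jwt_rpow_nonneg j _)

lemma one_le_dprod (τ : ℝ) (k : ℕ →₀ ℤ) : 1 ≤ dprod τ k := by
  rw [dprod]
  calc (1:ℝ) = ∏ _j ∈ k.support, 1 := (Finset.prod_const_one).symm
    _ ≤ ∏ j ∈ k.support, (1 + jwt j ^ (1 + τ) * |(k j : ℝ)| ^ (1 + τ)) := by
      refine Finset.prod_le_prod (fun j _ => zero_le_one) (fun j _ => ?_)
      have h1 : 0 ≤ jwt j ^ (1 + τ) * |(k j : ℝ)| ^ (1 + τ) :=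
        mul_nonneg (jwt_rpow_nonneg j _) (Real.rpow_nonneg (abs_nonneg _) _)
      linarith

lemma dprod_pos (τ : ℝ) (k : ℕ →₀ ℤ) : 0 < dprod τ k :=
  lt_of_lt_of_le one_pos (one_le_dprod τ k)

lemma dprod_ratio {τ₀ τ : ℝ} (hτ₀ : 0 < τ₀) (hτ : τ₀ + 1 < τ) (k : ℕ →₀ ℤ) :
    dprod τ₀ k ≤ (∏ j ∈ k.support, 2 * jwt j ^ (-(τ - τ₀)) * |(k j : ℝ)| ^ (-(τ - τ₀)))
      * dprod τ k := by
  rw [dprod, dprod, ← Finset.prod_mul_distrib]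
  refine Finset.prod_le_prod (fun j _ => by
    have h1 : 0 ≤ jwt j ^ (1 + τ₀) * |(k j : ℝ)| ^ (1 + τ₀) :=
      mul_nonneg (jwt_rpow_nonneg j _) (Real.rpow_nonneg (abs_nonneg _) _)
    linarith) (fun j hj => ?_)
  have hkj : (k j : ℝ) ≠ 0 := by
    exact_mod_cast Finsupp.mem_support_iff.1 hj
  have hm1 : 1 ≤ |(k j : ℝ)| := by
    have : (1 : ℤ) ≤ |k j| := Int.one_le_abs (Finsupp.mem_support_iff.1 hj)
    calc (1:ℝ) ≤ |(k j : ℤ)| := by exact_mod_cast this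
      _ = |(k j : ℝ)| := by push_cast; ring
  have hm0 : (0:ℝ) < |(k j : ℝ)| := lt_of_lt_of_le one_pos hm1
  have hw1 : 1 ≤ jwt j := one_le_jwt j
  have hw0 : (0:ℝ) < jwt j := jwt_pos j
  set w := jwt j
  set m := |(k j : ℝ)|
  have hup : 1 + w ^ (1 + τ₀) * m ^ (1 + τ₀) ≤ 2 * (w ^ (1 + τ₀) * m ^ (1 + τ₀)) := by
    have h1 : 1 ≤ w ^ (1 + τ₀) := Real.one_le_rpow hw1 (by linarith)
    have h2 : 1 ≤ m ^ (1 + τ₀) := Real.one_le_rpow hm1 (by linarith)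
    nlinarith
  have hdown : 2 * (w ^ (1 + τ₀) * m ^ (1 + τ₀))
      ≤ 2 * w ^ (-(τ - τ₀)) * m ^ (-(τ - τ₀)) * (1 + w ^ (1 + τ) * m ^ (1 + τ)) := by
    have he : 2 * w ^ (-(τ - τ₀)) * m ^ (-(τ - τ₀)) * (w ^ (1 + τ) * m ^ (1 + τ))
        = 2 * (w ^ (1 + τ₀) * m ^ (1 + τ₀)) := by
      have e0 : 2 * w ^ (-(τ - τ₀)) * m ^ (-(τ - τ₀)) * (w ^ (1 + τ) * m ^ (1 + τ))
          = 2 * (w ^ (-(τ - τ₀)) * w ^ (1 + τ)) * (m ^ (-(τ - τ₀)) * m ^ (1 + τ)) := by ring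
      rw [e0, ← Real.rpow_add hw0, ← Real.rpow_add hm0,
        show (-(τ - τ₀) + (1 + τ)) = 1 + τ₀ by ring]
      ring
    have hpos : 0 ≤ 2 * w ^ (-(τ - τ₀)) * m ^ (-(τ - τ₀)) := by
      have := Real.rpow_nonneg hw0.le (-(τ - τ₀))
      have := Real.rpow_nonneg hm0.le (-(τ - τ₀))
      positivity
    nlinarith [Real.rpow_nonneg hw0.le (1+τ), Real.rpow_nonneg hm0.le (1+τ)]
  linarith

lemma Gw_eq {δ : ℝ} (k : ℕ →₀ ℤ) :
    Gw δ k = ENNReal.ofReal (∏ j ∈ k.support, 2 * jwt j ^ (-δ) * |(k j : ℝ)| ^ (-δ)) := by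
  rw [ENNReal.ofReal_prod_of_nonneg (fun j _ => by
    have h1 := jwt_rpow_nonneg j (-δ)
    have h2 := Real.rpow_nonneg (abs_nonneg ((k j : ℝ))) (-δ)
    positivity)]
  refine Finset.prod_congr rfl fun j hj => ?_
  rw [cfac, if_neg (Finsupp.mem_support_iff.1 hj)]

lemma inner_bound (A ε a : ℝ) (hA : 0 < A) (hε : 0 < ε) (ha : a ≠ 0) :
    ∑' n : ℤ, volume (Set.Icc A (1.01 * A) ∩
        {ω : ℝ | |ω * a - 2 * (n : ℝ) * Real.pi| < ε})
      ≤ ENNReal.ofReal ((((1.01 * A - A) * |a| + 2 * ε) / (2 * Real.pi) + 1)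
          * (2 * ε / |a|)) := by
  have hπ : (0:ℝ) < Real.pi := Real.pi_pos
  have hB : (0:ℝ) < |a| := abs_pos.2 ha
  set L : ℝ := 1.01 * A - A with hL
  set p : ℝ := min (A * a) (1.01 * A * a) with hp
  set q : ℝ := max (A * a) (1.01 * A * a) with hq
  set x : ℝ := (p - ε) / (2 * Real.pi) with hx
  set y : ℝ := (q + ε) / (2 * Real.pi) with hy
  set S : ℤ → Set ℝ := fun n => Set.Icc A (1.01 * A) ∩
      {ω : ℝ | |ω * a - 2 * (n : ℝ) * Real.pi| < ε} with hS
  set t : Finset ℤ := Finset.Icc ⌈x⌉ ⌊y⌋ with ht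
  have hpq : p ≤ q := min_le_max
  have hxy : x ≤ y := by
    apply div_le_div_of_nonneg_right ?_ (by positivity)
    linarith
  have hempty : ∀ n : ℤ, n ∉ t → S n = ∅ := by
    intro n hn
    rw [Set.eq_empty_iff_forall_notMem]
    rintro ω ⟨⟨hω1, hω2⟩, hω3⟩
    simp only [Set.mem_setOf_eq] at hω3
    have habs := abs_lt.1 hω3
    have hwa1 : p ≤ ω * a := by
      rcases le_total 0 a with h | h
      · exact le_trans (min_le_left _ _) (mul_le_mul_of_nonneg_right hω1 h)
      · exact le_trans (min_le_right _ _) (mul_le_mul_of_nonpos_right hω2 h)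
    have hwa2 : ω * a ≤ q := by
      rcases le_total 0 a with h | h
      · exact le_trans (mul_le_mul_of_nonneg_right hω2 h) (le_max_right _ _)
      · exact le_trans (mul_le_mul_of_nonpos_right hω1 h) (le_max_left _ _)
    have h1 : p - ε < (n : ℝ) * (2 * Real.pi) := by nlinarith [habs.2]
    have h2 : (n : ℝ) * (2 * Real.pi) < q + ε := by nlinarith [habs.1]
    have hxn : x < (n : ℝ) := by
      rw [hx, div_lt_iff₀ (by positivity)]
      linarith
    have hny : (n : ℝ) < y := by
      rw [hy, lt_div_iff₀ (by positivity)]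
      linarith
    apply hn
    rw [ht, Finset.mem_Icc]
    exact ⟨Int.ceil_le.2 hxn.le, Int.le_floor.2 hny.le⟩
  have hball : ∀ n : ℤ, volume (S n) ≤ ENNReal.ofReal (2 * (ε / |a|)) := by
    intro n
    have hsub : S n ⊆ Metric.ball ((2 * (n : ℝ) * Real.pi) / a) (ε / |a|) := by
      rintro ω ⟨_, hω⟩
      simp only [Set.mem_setOf_eq] at hω
      rw [Metric.mem_ball, Real.dist_eq]
      have he : ω - 2 * (n : ℝ) * Real.pi / a = (ω * a - 2 * (n : ℝ) * Real.pi) / a := by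
        field_simp
      rw [he, abs_div]
      exact (div_lt_div_iff_of_pos_right hB).2 hω
    calc volume (S n) ≤ volume (Metric.ball ((2 * (n : ℝ) * Real.pi) / a) (ε / |a|)) :=
          measure_mono hsub
      _ = ENNReal.ofReal (2 * (ε / |a|)) := Real.volume_ball _ _
  have hsum : ∑' n : ℤ, volume (S n) = ∑ n ∈ t, volume (S n) :=
    tsum_eq_sum (fun n hn => by rw [hempty n hn]; exact measure_empty)
  have hcard : (t.card : ℝ) ≤ y - x + 1 := by
    rw [ht, Int.card_Icc]
    rcases le_or_gt (⌊y⌋ + 1 - ⌈x⌉) 0 with h | h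
    · rw [Int.toNat_of_nonpos h]
      push_cast
      linarith
    · have h3 : (((⌊y⌋ + 1 - ⌈x⌉).toNat : ℕ) : ℝ) = ((⌊y⌋ : ℝ) + 1 - (⌈x⌉ : ℝ)) := by
        rw [show (((⌊y⌋ + 1 - ⌈x⌉).toNat : ℕ) : ℝ) = (((⌊y⌋ + 1 - ⌈x⌉).toNat : ℤ) : ℝ) by
          push_cast; ring, Int.toNat_of_nonneg h.le]
        push_cast; ring
      rw [h3]
      have h1 := Int.floor_le y
      have h2 := Int.le_ceil x
      linarith
  calc ∑' n : ℤ, volume (S n) = ∑ n ∈ t, volume (S n) := hsum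
    _ ≤ ∑ _n ∈ t, ENNReal.ofReal (2 * (ε / |a|)) := Finset.sum_le_sum fun n _ => hball n
    _ = (t.card : ENNReal) * ENNReal.ofReal (2 * (ε / |a|)) := by
        rw [Finset.sum_const, nsmul_eq_mul]
    _ = ENNReal.ofReal ((t.card : ℝ) * (2 * (ε / |a|))) := by
        rw [← ENNReal.ofReal_natCast t.card, ← ENNReal.ofReal_mul (Nat.cast_nonneg _)]
    _ ≤ ENNReal.ofReal ((y - x + 1) * (2 * (ε / |a|))) := by
        apply ENNReal.ofReal_le_ofReal
        apply mul_le_mul_of_nonneg_right hcard (by positivity)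
    _ ≤ ENNReal.ofReal (((L * |a| + 2 * ε) / (2 * Real.pi) + 1) * (2 * ε / |a|)) := by
        apply ENNReal.ofReal_le_ofReal
        have hqp : q - p = L * |a| := by
          rw [hq, hp, max_sub_min_eq_abs]
          have : 1.01 * A * a - A * a = L * a := by rw [hL]; ring
          rw [this, abs_mul, abs_of_pos (by rw [hL]; nlinarith)]
        have hyx : y - x = (L * |a| + 2 * ε) / (2 * Real.pi) := by
          rw [hy, hx, div_sub_div_same, ← hqp]
          ring_nf
        rw [hyx]
        apply le_of_eq
        ring

lemma alg_bound (L ν₀ D₀ ε B : ℝ) (hL : 0 < L) (hν₀ : 0 < ν₀) (hD₀ : 1 ≤ D₀)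
    (hB : ν₀ / D₀ ≤ B) (hB0 : 0 < B) (hε : 0 < ε) (hε1 : ε ≤ 1) :
    ((L * B + 2 * ε) / (2 * Real.pi) + 1) * (2 * ε / B) ≤ ε * ((L + 4 / ν₀) * D₀) := by
  have hπ := Real.pi_gt_three
  have hD₀0 : (0:ℝ) < D₀ := by linarith
  have hν₀B : ν₀ ≤ B * D₀ := (div_le_iff₀ hD₀0).1 hB
  rw [div_add' _ _ _ (ne_of_gt (by positivity : (0:ℝ) < 2 * Real.pi)), div_mul_div_comm,
    div_le_iff₀ (by positivity : (0:ℝ) < 2 * Real.pi * B)]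
  have hc : 4 ≤ (4 / ν₀) * (B * D₀) := by
    have h1 : (4 / ν₀) * ν₀ = 4 := by field_simp
    have h2 : 0 < 4 / ν₀ := by positivity
    nlinarith
  have hπD : 3 ≤ Real.pi * D₀ := by nlinarith
  have e1 : 2 * ε * (L * B) * 1 ≤ 2 * ε * (L * B) * (Real.pi * D₀) :=
    mul_le_mul_of_nonneg_left (by nlinarith) (by positivity)
  have e2 : ε * ε ≤ ε := by nlinarith
  have e3 : 2 * Real.pi * ε * 4 ≤ 2 * Real.pi * ε * ((4 / ν₀) * (B * D₀)) :=
    mul_le_mul_of_nonneg_left hc (by positivity)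
  nlinarith [mul_pos Real.pi_pos hε, mul_pos (mul_pos Real.pi_pos hε) hB0]

/-- on a bounded interval `[A, 1.01 A]` the measure of the complement of
`𝒟(ν,τ;α)` is at most `ν · C(τ,τ₀,ν₀,A)`, for `α` satisfying the infinite-dimensional
Diophantine condition with constants `ν₀, τ₀` and `τ > τ₀ + 1`. -/
theorem stmt1 (τ₀ ν₀ τ A : ℝ) (hν₀ : 0 < ν₀) (hτ₀ : 0 < τ₀) (hτ : τ₀ + 1 < τ) (hA : 0 < A) :
    ∃ C : ℝ, 0 < C ∧
      ∀ (α : ℕ → ℝ), (∀ j, α j ∈ Set.Icc (0 : ℝ) 1) →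
        (∀ k : ℕ →₀ ℤ, k ≠ 0 → ν₀ / dprod τ₀ k ≤ |adot α k|) →
        ∀ ν : ℝ, 0 < ν →
          MeasureTheory.volume
            (Set.Icc A (1.01 * A) \
              {ω : ℝ | ∀ k : ℕ →₀ ℤ, k ≠ 0 → ∀ n : ℤ,
                ν / dprod τ k ≤ |ω * adot α k - 2 * (n : ℝ) * Real.pi|})
            ≤ ENNReal.ofReal (ν * C) := by
  set δ : ℝ := τ - τ₀ with hδdef
  have hδ : 1 < δ := by rw [hδdef]; linarith
  set Z : ℝ := ∑' n : ℕ, ((n : ℝ) + 1) ^ (-δ) with hZdef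
  set W : ℝ := ∑' j : ℕ, jwt j ^ (-δ) with hWdef
  set Bex : ℝ := Real.exp (4 * Z * W) with hBexdef
  have hBex : 0 < Bex := Real.exp_pos _
  set L : ℝ := 1.01 * A - A with hLdef
  have hL : 0 < L := by rw [hLdef]; nlinarith
  set K : ℝ := L + 4 / ν₀ with hKdef
  have hK0 : 0 < K := by rw [hKdef]; positivity
  refine ⟨K * Bex + L, by positivity, ?_⟩
  intro α hα hdio ν hν
  rcases le_or_gt ν 1 with hν1 | hν1
  · -- small ν : the real estimate
    set T : (ℕ →₀ ℤ) → ℤ → Set ℝ := fun k n =>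
      if k = 0 then ∅ else
        Set.Icc A (1.01 * A) ∩
          {ω : ℝ | |ω * adot α k - 2 * (n : ℝ) * Real.pi| < ν / dprod τ k} with hT
    have hsub : Set.Icc A (1.01 * A) \
        {ω : ℝ | ∀ k : ℕ →₀ ℤ, k ≠ 0 → ∀ n : ℤ,
          ν / dprod τ k ≤ |ω * adot α k - 2 * (n : ℝ) * Real.pi|}
        ⊆ ⋃ k : ℕ →₀ ℤ, ⋃ n : ℤ, T k n := by
      rintro ω ⟨hωI, hωD⟩
      simp only [Set.mem_setOf_eq, not_forall] at hωD
      obtain ⟨k, hk0, n, hlt⟩ := hωD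
      refine Set.mem_iUnion.2 ⟨k, Set.mem_iUnion.2 ⟨n, ?_⟩⟩
      rw [hT]
      simp only [if_neg hk0]
      exact ⟨hωI, not_le.1 hlt⟩
    have hperk : ∀ k : ℕ →₀ ℤ, ∑' n : ℤ, volume (T k n)
        ≤ ENNReal.ofReal (ν * K) * Gw δ k := by
      intro k
      by_cases hk : k = 0
      · simp [hT, hk]
      · set a : ℝ := adot α k with hadef
        set D₀ : ℝ := dprod τ₀ k with hD₀def
        set D : ℝ := dprod τ k with hDdef
        have hD₀1 : 1 ≤ D₀ := one_le_dprod _ _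
        have hD1 : 1 ≤ D := one_le_dprod _ _
        have hD0 : 0 < D := by linarith
        have hBa : ν₀ / D₀ ≤ |a| := hdio k hk
        have ha0 : a ≠ 0 := by
          have : 0 < ν₀ / D₀ := by positivity
          intro h
          rw [h, abs_zero] at hBa
          linarith
        have hB0 : 0 < |a| := abs_pos.2 ha0
        set ε : ℝ := ν / D with hεdef
        have hε : 0 < ε := by positivity
        have hε1 : ε ≤ 1 := by
          rw [hεdef, div_le_one hD0]
          linarith
        have hTeq : ∀ n : ℤ, T k n = Set.Icc A (1.01 * A) ∩
            {ω : ℝ | |ω * a - 2 * (n : ℝ) * Real.pi| < ε} := by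
          intro n
          rw [hT]
          simp only [if_neg hk]
          rfl
        calc ∑' n : ℤ, volume (T k n)
            = ∑' n : ℤ, volume (Set.Icc A (1.01 * A) ∩
                {ω : ℝ | |ω * a - 2 * (n : ℝ) * Real.pi| < ε}) := by
              exact tsum_congr fun n => by rw [hTeq n]
          _ ≤ ENNReal.ofReal (((L * |a| + 2 * ε) / (2 * Real.pi) + 1) * (2 * ε / |a|)) := by
              have := inner_bound A ε a hA hε ha0
              rwa [← hLdef] at this
          _ ≤ ENNReal.ofReal (ε * (K * D₀)) := by
              apply ENNReal.ofReal_le_ofReal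
              have := alg_bound L ν₀ D₀ ε |a| hL hν₀ hD₀1 hBa hB0 hε hε1
              rwa [← hKdef] at this
          _ ≤ ENNReal.ofReal (ν * K) * Gw δ k := by
              rw [Gw_eq k, ← ENNReal.ofReal_mul (by positivity)]
              apply ENNReal.ofReal_le_ofReal
              set gr : ℝ := ∏ j ∈ k.support, 2 * jwt j ^ (-δ) * |(k j : ℝ)| ^ (-δ) with hgr
              have hgr0 : 0 ≤ gr := by
                rw [hgr]
                apply Finset.prod_nonneg
                intro j _
                have h1 := jwt_rpow_nonneg j (-δ)
                have h2 := Real.rpow_nonneg (abs_nonneg ((k j : ℝ))) (-δ)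
                positivity
              have hratio : D₀ / D ≤ gr := by
                rw [div_le_iff₀ hD0]
                have := dprod_ratio hτ₀ hτ k
                rw [← hD₀def, ← hDdef, ← hgr] at this
                · linarith
              have he : ε * (K * D₀) = (ν * K) * (D₀ / D) := by
                rw [hεdef]
                field_simp
              rw [he]
              exact mul_le_mul_of_nonneg_left hratio (by positivity)
    calc volume (Set.Icc A (1.01 * A) \ _)
        ≤ volume (⋃ k : ℕ →₀ ℤ, ⋃ n : ℤ, T k n) := measure_mono hsub
      _ ≤ ∑' k : ℕ →₀ ℤ, volume (⋃ n : ℤ, T k n) := measure_iUnion_le _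
      _ ≤ ∑' k : ℕ →₀ ℤ, ∑' n : ℤ, volume (T k n) :=
          ENNReal.tsum_le_tsum fun k => measure_iUnion_le _
      _ ≤ ∑' k : ℕ →₀ ℤ, ENNReal.ofReal (ν * K) * Gw δ k :=
          ENNReal.tsum_le_tsum hperk
      _ = ENNReal.ofReal (ν * K) * ∑' k : ℕ →₀ ℤ, Gw δ k := ENNReal.tsum_mul_left
      _ ≤ ENNReal.ofReal (ν * K) * ENNReal.ofReal Bex := by
          apply mul_le_mul_right
          have := Gw_tsum_le hδ
          rwa [← hZdef, ← hWdef, ← hBexdef] at this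
      _ = ENNReal.ofReal (ν * K * Bex) := by
          rw [← ENNReal.ofReal_mul (by positivity)]
      _ ≤ ENNReal.ofReal (ν * (K * Bex + L)) := by
          apply ENNReal.ofReal_le_ofReal
          nlinarith
  · -- large ν : trivial bound by the measure of the interval
    calc volume (Set.Icc A (1.01 * A) \ _)
        ≤ volume (Set.Icc A (1.01 * A)) := measure_mono Set.diff_subset
      _ = ENNReal.ofReal (1.01 * A - A) := Real.volume_Icc
      _ ≤ ENNReal.ofReal (ν * (K * Bex + L)) := by
          apply ENNReal.ofReal_le_ofReal
          rw [← hLdef]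
          have h1 : (0:ℝ) < K * Bex + L := by positivity
          nlinarith [mul_le_mul_of_nonneg_right hν1.le h1.le]
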